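/- arXiv:0905.0747 — 6 statements merged into one kernel-verified Lean document; each statement's English description precedes it below -/
import Mathlib

section
/- Let P be a finite set of at least two points in the Euclidean plane and let c be a center of the smallest enclosing circle of P. Then there do not exist points p, p' ∈ P such that the vectors p − c and p' − c are linearly independent and every point of P lies in the closed convex cone with apex c spanned by p and p', i.e. in the set { c + α • (p − c) + β • (p' − c) : α ≥ 0, β ≥ 0 }. (Equivalently: for no two points p, p' of P is the concave sector determined at c by the half-lines [c, p) and [c, p') free of points of P.) -/
open Metric

noncomputable abbrev E := EuclideanSpace ℝ (Fin 2)

/-- A point `c` is a center of the smallest enclosing circle of `S`. -/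
def IsSECCenter (S : Set E) (c : E) : Prop :=
  ∀ x : E, (⨆ p ∈ S, dist c p) ≤ (⨆ p ∈ S, dist x p)

lemma bSup_eq_sup' (P : Set E) (hPfin : P.Finite) (hs : hPfin.toFinset.Nonempty) (x : E) :
    (⨆ p ∈ P, dist x p) = hPfin.toFinset.sup' hs (fun q => dist x q) := by
  set s := hPfin.toFinset with hsdef
  set B := s.sup' hs (fun q => dist x q) with hBdef
  obtain ⟨q₀, hq₀⟩ := hs
  have hB0 : 0 ≤ B := le_trans dist_nonneg (Finset.le_sup' (fun q => dist x q) hq₀)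
  apply le_antisymm
  · exact Real.iSup_le (fun q => Real.iSup_le
      (fun hq => Finset.le_sup' (fun q => dist x q) (hPfin.mem_toFinset.2 hq)) hB0) hB0
  · refine Finset.sup'_le _ _ fun q hq => ?_
    have hq' : q ∈ P := hPfin.mem_toFinset.1 hq
    have bdd : BddAbove (Set.range fun p => ⨆ _ : p ∈ P, dist x p) :=
      ⟨B, Set.forall_mem_range.2 fun p => Real.iSup_le
        (fun hp => Finset.le_sup' (fun q => dist x q) (hPfin.mem_toFinset.2 hp)) hB0⟩
    have heq : (⨆ _ : q ∈ P, dist x q) = dist x q := ciSup_pos hq'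
    calc dist x q = ⨆ _ : q ∈ P, dist x q := heq.symm
      _ ≤ _ := le_ciSup bdd q

set_option maxHeartbeats 1000000 in
theorem stmt2
    (P : Set E) (hPfin : P.Finite) (hPcard : 2 ≤ P.ncard)
    (c : E) (hc : IsSECCenter P c) :
    ¬ ∃ p ∈ P, ∃ p' ∈ P,
        LinearIndependent ℝ ![p - c, p' - c] ∧
        P ⊆ {x : E | ∃ α β : ℝ, 0 ≤ α ∧ 0 ≤ β ∧
              x = c + α • (p - c) + β • (p' - c)} := by
  classical
  rintro ⟨p, hp, p', hp', hli, hcone⟩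
  set u := p - c with hu_def
  set v := p' - c with hv_def
  -- linear independence consequences
  have hpair : ∀ a b : ℝ, a • u + b • v = 0 → a = 0 ∧ b = 0 := by
    intro a b hab
    have := Fintype.linearIndependent_iff.1 hli ![a, b] ?_
    · exact ⟨this 0, this 1⟩
    · simpa [Fin.sum_univ_two] using hab
  have hu : u ≠ 0 := by
    intro h
    have := hpair 1 0 (by simp [h])
    exact one_ne_zero this.1
  have hv : v ≠ 0 := by
    intro h
    have := hpair 0 1 (by simp [h])
    exact one_ne_zero this.2
  have hun : 0 < ‖u‖ := norm_pos_iff.2 hu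
  have hvn : 0 < ‖v‖ := norm_pos_iff.2 hv
  -- strict Cauchy-Schwarz : -(‖u‖*‖v‖) < ⟪u,v⟫
  have hcs : -(‖u‖ * ‖v‖) < inner ℝ u v := by
    have hne : ‖v‖ • (-u) ≠ ‖-u‖ • v := by
      intro h
      have h2 : ‖v‖ • u + ‖u‖ • v = 0 := by
        rw [norm_neg] at h
        have : -(‖v‖ • u) = ‖u‖ • v := by rw [← smul_neg]; exact h
        rw [← this]; abel
      exact absurd ((hpair _ _ h2).1) (ne_of_gt hvn)
    have := inner_lt_norm_mul_iff_real.2 hne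
    rw [norm_neg] at this
    have h3 : (inner ℝ (-u) v : ℝ) = -(inner ℝ u v : ℝ) := by
      rw [inner_neg_left]
    rw [h3] at this
    linarith
  set d : E := ‖v‖ • u + ‖u‖ • v with hd_def
  have hud : (0:ℝ) < inner ℝ u d := by
    have : (inner ℝ u d : ℝ) = ‖v‖ * ‖u‖^2 + ‖u‖ * inner ℝ u v := by
      rw [hd_def, inner_add_right, real_inner_smul_right, real_inner_smul_right,
        real_inner_self_eq_norm_sq]
    rw [this]
    nlinarith
  have hvd : (0:ℝ) < inner ℝ v d := by
    have : (inner ℝ v d : ℝ) = ‖v‖ * inner ℝ u v + ‖u‖ * ‖v‖^2 := by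
      rw [hd_def, inner_add_right, real_inner_smul_right, real_inner_smul_right,
        real_inner_self_eq_norm_sq, real_inner_comm v u]
    rw [this]
    nlinarith
  have hd : d ≠ 0 := by
    intro h
    rw [h, inner_zero_right] at hud
    exact lt_irrefl 0 hud
  have hdn : 0 < ‖d‖ := norm_pos_iff.2 hd
  -- the finset
  set s := hPfin.toFinset with hsdef
  have hcard : 2 ≤ s.card := by
    rwa [Set.ncard_eq_toFinset_card P hPfin] at hPcard
  have hs : s.Nonempty := Finset.card_pos.mp (lt_of_lt_of_le one_pos (le_trans one_le_two hcard))
  set R := s.sup' hs (fun q => dist c q) with hRdef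
  obtain ⟨q₁, hq₁s, hq₁c⟩ := Finset.exists_mem_ne (s := s) (by omega) c
  have hR0 : 0 < R :=
    lt_of_lt_of_le (dist_pos.2 (Ne.symm hq₁c)) (Finset.le_sup' (fun q => dist c q) hq₁s)
  -- inner products are positive away from c
  have key : ∀ q ∈ s, q ≠ c → (0:ℝ) < inner ℝ (q - c) d := by
    intro q hqs hqc
    obtain ⟨α, β, hα, hβ, hq⟩ := hcone (hPfin.mem_toFinset.1 hqs)
    have hqsub : q - c = α • u + β • v := by
      rw [hq]; abel
    have hinner : (inner ℝ (q - c) d : ℝ) = α * inner ℝ u d + β * inner ℝ v d := by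
      rw [hqsub, inner_add_left, real_inner_smul_left, real_inner_smul_left]
    have hne : ¬(α = 0 ∧ β = 0) := by
      rintro ⟨rfl, rfl⟩
      apply hqc
      rw [hq]; simp
    rw [hinner]
    rcases eq_or_lt_of_le hα with h | h
    · rcases eq_or_lt_of_le hβ with h' | h'
      · exact absurd ⟨h.symm, h'.symm⟩ hne
      · nlinarith
    · nlinarith
  -- epsilon
  set s' := s.filter (· ≠ c) with hs'def
  have hs' : s'.Nonempty := ⟨q₁, Finset.mem_filter.2 ⟨hq₁s, hq₁c⟩⟩
  set ε := s'.inf' hs' (fun q => (inner ℝ (q - c) d : ℝ)) with hεdef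
  have hε : 0 < ε := by
    rw [hεdef, Finset.lt_inf'_iff]
    intro q hq
    have := Finset.mem_filter.1 hq
    exact key q this.1 this.2
  -- the perturbed center
  set t := min (ε / ‖d‖^2) (R / (2*‖d‖)) with htdef
  have ht0 : 0 < t := lt_min (by positivity) (by positivity)
  have ht1 : t * ‖d‖^2 ≤ ε := by
    have := min_le_left (ε / ‖d‖^2) (R / (2*‖d‖))
    calc t * ‖d‖^2 ≤ (ε / ‖d‖^2) * ‖d‖^2 := by
          apply mul_le_mul_of_nonneg_right _ (by positivity)
          rw [htdef]; exact this
      _ = ε := by field_simp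
  have ht2 : t * ‖d‖ ≤ R/2 := by
    have := min_le_right (ε / ‖d‖^2) (R / (2*‖d‖))
    calc t * ‖d‖ ≤ (R / (2*‖d‖)) * ‖d‖ := by
          apply mul_le_mul_of_nonneg_right _ (by positivity)
          rw [htdef]; exact this
      _ = R/2 := by field_simp
  set x := c + t • d with hxdef
  have hlt : ∀ q ∈ s, dist x q < R := by
    intro q hqs
    by_cases hqc : q = c
    · subst hqc
      have : dist x q = t * ‖d‖ := by
        rw [hxdef, dist_eq_norm]
        simp [norm_smul, abs_of_pos ht0]
      rw [this]
      linarith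
    · have hqε : ε ≤ inner ℝ (q - c) d :=
        Finset.inf'_le (fun q => (inner ℝ (q - c) d : ℝ))
          (Finset.mem_filter.2 ⟨hqs, hqc⟩)
      have hqR : ‖q - c‖ ≤ R := by
        have : dist c q = ‖q - c‖ := by rw [dist_eq_norm, norm_sub_rev]
        rw [← this]
        exact Finset.le_sup' (fun q => dist c q) hqs
      have hxq : x - q = t • d - (q - c) := by rw [hxdef]; abel
      have hsq : dist x q ^ 2 = t^2 * ‖d‖^2 - 2 * t * inner ℝ (q - c) d + ‖q - c‖^2 := by
        rw [dist_eq_norm, hxq, norm_sub_sq_real, real_inner_smul_left, norm_smul,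
          real_inner_comm]
        rw [Real.norm_eq_abs, abs_of_pos ht0]
        ring
      have h1 : t^2 * ‖d‖^2 ≤ t * ε := by
        have : t^2 * ‖d‖^2 = t * (t * ‖d‖^2) := by ring
        rw [this]
        exact mul_le_mul_of_nonneg_left ht1 ht0.le
      have hsqlt : dist x q ^ 2 < R ^ 2 := by
        rw [hsq]
        nlinarith [mul_le_mul_of_nonneg_left hqε ht0.le,
          pow_le_pow_left₀ (norm_nonneg (q - c)) hqR 2, mul_pos ht0 hε]
      exact lt_of_pow_lt_pow_left₀ 2 hR0.le hsqlt
  have hsup : s.sup' hs (fun q => dist x q) < R := (Finset.sup'_lt_iff hs).2 hlt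
  have := hc x
  rw [bSup_eq_sup' P hPfin hs c, bSup_eq_sup' P hPfin hs x] at this
  exact absurd (lt_of_le_of_lt this hsup) (lt_irrefl R)
end

section
/- Let P be a finite nonempty set of points in the Euclidean plane, let c be a center of the smallest enclosing circle of P and R its radius. Then every point of P lying on the smallest enclosing circle lies on the boundary of the convex hull of P: for every p ∈ P with dist c p = R, one has p ∈ frontier (convexHull ℝ P). -/
open Metric

theorem stmt4
    (P : Set E) (hPfin : P.Finite) (hPne : P.Nonempty)
    (c : E) (hc : IsSECCenter P c)
    (R : ℝ) (hR : R = ⨆ p ∈ P, dist c p) :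
    ∀ p ∈ P, dist c p = R → p ∈ frontier (convexHull ℝ P) := by
  intro p hp hpR
  -- P is bounded above in distance by R
  have hbdd : BddAbove (Set.range fun q => ⨆ _ : q ∈ P, dist c q) := by
    have hfin : ((fun q => ⨆ _ : q ∈ P, dist c q) '' P ∪ {0}).Finite :=
      (hPfin.image _).union (Set.finite_singleton 0)
    apply hfin.bddAbove.mono
    rintro x ⟨q, rfl⟩
    by_cases hq : q ∈ P
    · exact Or.inl ⟨q, hq, rfl⟩
    · right
      simp only [Set.mem_singleton_iff]
      haveI : IsEmpty (q ∈ P) := ⟨hq⟩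
      rw [iSup_of_empty' (fun _ : q ∈ P => dist c q), Real.sSup_empty]
  have hsub : P ⊆ closedBall c R := by
    intro q hq
    have h1 : dist c q = ⨆ _ : q ∈ P, dist c q := (ciSup_pos (f := fun _ : q ∈ P => dist c q) hq).symm
    have h2 : (⨆ _ : q ∈ P, dist c q) ≤ ⨆ q ∈ P, dist c q := le_ciSup hbdd q
    simp only [mem_closedBall, dist_comm q c]
    rw [hR]
    exact h1.le.trans h2
  have hhull : convexHull ℝ P ⊆ closedBall c R :=
    convexHull_min hsub (convex_closedBall c R)
  constructor
  · exact subset_closure (subset_convexHull ℝ P hp)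
  · intro hint
    have : p ∈ ball c R := by
      rw [← interior_closedBall']
      exact interior_mono hhull hint
    rw [mem_ball, dist_comm] at this
    exact absurd hpR (ne_of_lt this)
end

section
/- Let P be a finite set of at least two points in the Euclidean plane and let c be a center of the smallest enclosing circle of P. Let Q be a finite nonempty set of points such that for every p ∈ P there exists q ∈ Q with q on the segment from c to p and q ≠ c (each position of P moves in a straight line toward c, and for each position at least one robot does not reach c). Then c is strictly inside the smallest enclosing circle of Q: if c' is a center of the smallest enclosing circle of Q and R' its radius, then dist c' c < R'. -/
open Metric

lemma dist_le_sup' {S : Set E} (hS : S.Finite) {x q : E} (hq : q ∈ S) :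
    dist x q ≤ ⨆ p ∈ S, dist x p := by
  have hne : S.Nonempty := ⟨q, hq⟩
  have hbdd : BddAbove (Set.range fun i : S => dist x i) := by
    rw [← Set.image_eq_range]
    exact (hS.image _).bddAbove
  have hf' : sSup (∅ : Set ℝ) ≤ ⨆ i : S, dist x i := by
    rw [Real.sSup_empty]
    exact Real.iSup_nonneg fun i => dist_nonneg
  rw [← ciSup_subtype'' hbdd hf']
  exact le_ciSup hbdd ⟨q, hq⟩

lemma sup_le_of_forall {S : Set E} {x : E} {B : ℝ} (hB : 0 ≤ B)
    (h : ∀ p ∈ S, dist x p ≤ B) : (⨆ p ∈ S, dist x p) ≤ B :=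
  Real.iSup_le (fun p => Real.iSup_le (fun hp => h p hp) hB) hB

lemma exists_nonpos_inner (P : Set E) (hPfin : P.Finite) (hPcard : 2 ≤ P.ncard)
    (c : E) (hc : IsSECCenter P c) (v : E) (hv : v ≠ 0) :
    ∃ p ∈ P, p ≠ c ∧ inner ℝ v (p - c) ≤ (0:ℝ) := by
  classical
  by_contra hcon
  push_neg at hcon
  -- hcon : ∀ p ∈ P, p ≠ c → 0 < ⟪v, p - c⟫
  set R : ℝ := ⨆ p ∈ P, dist c p with hRdef
  -- find a point of P different from c
  obtain ⟨a, b, ha, hb, hab⟩ : ∃ a b, a ∈ P ∧ b ∈ P ∧ a ≠ b := by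
    rw [← Set.one_lt_ncard_iff hPfin]; omega
  obtain ⟨p₀, hp₀, hp₀c⟩ : ∃ p₀ ∈ P, p₀ ≠ c := by
    by_cases hac : a = c
    · exact ⟨b, hb, fun h => hab (by rw [hac, h])⟩
    · exact ⟨a, ha, hac⟩
  have hRpos : 0 < R := lt_of_lt_of_le (by simpa [dist_comm] using dist_pos.2 hp₀c.symm)
    (dist_le_sup' hPfin hp₀)
  have hvnorm : 0 < ‖v‖ := norm_pos_iff.2 hv
  -- finset of points of P other than c
  let F : Finset E := hPfin.toFinset.filter (· ≠ c)
  have hFne : F.Nonempty := ⟨p₀, by simp [F, hPfin.mem_toFinset, hp₀, hp₀c]⟩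
  set m : ℝ := F.inf' hFne (fun p => inner ℝ v (p - c)) with hm
  have hmpos : 0 < m := by
    rw [hm, Finset.lt_inf'_iff]
    intro p hp
    simp only [F, Finset.mem_filter, hPfin.mem_toFinset] at hp
    exact hcon p hp.1 hp.2
  set ε : ℝ := min (R / (2 * ‖v‖)) (m / ‖v‖ ^ 2) with hε
  have hεpos : 0 < ε := lt_min (by positivity) (by positivity)
  have hε1 : ε * ‖v‖ ≤ R / 2 := by
    have := min_le_left (R / (2 * ‖v‖)) (m / ‖v‖ ^ 2)
    calc ε * ‖v‖ ≤ (R / (2 * ‖v‖)) * ‖v‖ := by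
          exact mul_le_mul_of_nonneg_right this (norm_nonneg v)
      _ = R / 2 := by field_simp
  have hε2 : ε * ‖v‖ ^ 2 ≤ m := by
    have h := min_le_right (R / (2 * ‖v‖)) (m / ‖v‖ ^ 2)
    calc ε * ‖v‖ ^ 2 ≤ (m / ‖v‖ ^ 2) * ‖v‖ ^ 2 :=
          mul_le_mul_of_nonneg_right h (by positivity)
      _ = m := by field_simp
  set B : ℝ := max (Real.sqrt (R ^ 2 - ε * m)) (R / 2) with hB
  have hBnonneg : 0 ≤ B := le_trans (by positivity) (le_max_right _ _)
  have hBltR : B < R := by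
    apply max_lt
    · rw [Real.sqrt_lt' hRpos]; nlinarith
    · linarith
  have hbound : ∀ p ∈ P, dist (c + ε • v) p ≤ B := by
    intro p hp
    by_cases hpc : p = c
    · subst hpc
      have : dist (p + ε • v) p = ε * ‖v‖ := by
        rw [dist_eq_norm]
        simp [norm_smul, abs_of_pos hεpos]
      rw [this]
      exact le_trans hε1 (le_max_right _ _)
    · -- p ≠ c
      have hinner : m ≤ inner ℝ v (p - c) :=
        Finset.inf'_le _ (by simp [F, Finset.mem_filter, hPfin.mem_toFinset, hp, hpc])
      have hdcp : dist c p ≤ R := dist_le_sup' hPfin hp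
      have hsq : dist (c + ε • v) p ^ 2 ≤ R ^ 2 - ε * m := by
        have h1 : dist (c + ε • v) p = ‖ε • v - (p - c)‖ := by
          rw [dist_eq_norm]
          congr 1; abel
        rw [h1, norm_sub_sq_real]
        have h2 : inner ℝ (ε • v) (p - c) = ε * (inner ℝ v (p - c) : ℝ) := real_inner_smul_left _ _ _
        have h3 : ‖ε • v‖ = ε * ‖v‖ := by simp [norm_smul, abs_of_pos hεpos]
        have h4 : ‖p - c‖ = dist c p := by rw [dist_eq_norm, norm_sub_rev]
        rw [h2, h3, h4]
        nlinarith [dist_nonneg (x := c) (y := p)]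
      calc dist (c + ε • v) p = Real.sqrt (dist (c + ε • v) p ^ 2) :=
            (Real.sqrt_sq dist_nonneg).symm
        _ ≤ Real.sqrt (R ^ 2 - ε * m) := Real.sqrt_le_sqrt hsq
        _ ≤ B := le_max_left _ _
  have : R ≤ B := le_trans (hc (c + ε • v)) (sup_le_of_forall hBnonneg hbound)
  linarith

theorem stmt5
    (P : Set E) (hPfin : P.Finite) (hPcard : 2 ≤ P.ncard)
    (c : E) (hc : IsSECCenter P c)
    (Q : Set E) (hQfin : Q.Finite) (hQne : Q.Nonempty)
    (hmove : ∀ p ∈ P, ∃ q ∈ Q, q ∈ segment ℝ c p ∧ q ≠ c)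
    (c' : E) (hc' : IsSECCenter Q c')
    (R' : ℝ) (hR' : R' = ⨆ q ∈ Q, dist c' q) :
    dist c' c < R' := by
  have hPne : P.Nonempty := Set.nonempty_of_ncard_ne_zero (by omega)
  -- produce q ∈ Q with dist c' c < dist c' q
  obtain ⟨q, hqQ, hq⟩ : ∃ q ∈ Q, dist c' c < dist c' q := by
    by_cases hcc : c' = c
    · obtain ⟨p, hp⟩ := hPne
      obtain ⟨q, hqQ, _, hqc⟩ := hmove p hp
      exact ⟨q, hqQ, by simpa [hcc] using dist_pos.2 (fun h => hqc h.symm)⟩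
    · obtain ⟨p, hp, hpc, hip⟩ := exists_nonpos_inner P hPfin hPcard c hc (c' - c)
        (sub_ne_zero.2 hcc)
      obtain ⟨q, hqQ, hseg, hqc⟩ := hmove p hp
      obtain ⟨a, b, ha, hb, habs, habq⟩ := hseg
      have hqeq : q - c = b • (p - c) := by
        rw [← habq]
        have : a = 1 - b := by linarith
        rw [this]
        module
      have hbpos : 0 < b := by
        rcases lt_or_eq_of_le hb with h | h
        · exact h
        · exfalso; apply hqc
          have : q - c = 0 := by rw [hqeq, ← h, zero_smul]
          exact sub_eq_zero.1 this
      have hpcnorm : 0 < ‖p - c‖ := norm_pos_iff.2 (sub_ne_zero.2 hpc)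
      refine ⟨q, hqQ, ?_⟩
      apply lt_of_pow_lt_pow_left₀ 2 dist_nonneg
      have h1 : dist c' q = ‖(c' - c) - b • (p - c)‖ := by
        rw [dist_eq_norm, show c' - q = (c' - c) - b • (p - c) by rw [← hqeq]; abel]
      rw [h1, norm_sub_sq_real, dist_eq_norm]
      have h2 : inner ℝ (c' - c) (b • (p - c)) = b * (inner ℝ (c' - c) (p - c) : ℝ) :=
        real_inner_smul_right _ _ _
      have h3 : ‖b • (p - c)‖ = b * ‖p - c‖ := by simp [norm_smul, abs_of_pos hbpos]
      rw [h2, h3]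
      have h5 : b * (inner ℝ (c' - c) (p - c) : ℝ) ≤ 0 := by nlinarith
      have h6 : 0 < (b * ‖p - c‖) ^ 2 := by positivity
      linarith
  calc dist c' c < dist c' q := hq
    _ ≤ R' := by rw [hR']; exact dist_le_sup' hQfin hqQ
end

section
/- Let P be a finite set of at least two points in the Euclidean plane and let c be a center of the smallest enclosing circle of P. If c lies on the boundary of the convex hull of P, i.e. c ∈ frontier (convexHull ℝ P), then there exist two points x, y ∈ P with x ≠ y such that c lies strictly between x and y on the segment [x, y], i.e. c ∈ openSegment ℝ x y. -/
open Metric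

open scoped RealInnerProductSpace

private lemma real_biSup_le {α : Type*} {S : Set α} {f : α → ℝ} {m : ℝ}
    (hm : 0 ≤ m) (h : ∀ p ∈ S, f p ≤ m) : (⨆ p ∈ S, f p) ≤ m :=
  Real.iSup_le (fun p => Real.iSup_le (fun hp => h p hp) hm) hm

private lemma real_le_biSup {α : Type*} {S : Set α} (hS : S.Finite) {f : α → ℝ} {q : α}
    (hq : q ∈ S) : f q ≤ ⨆ p ∈ S, f p := by
  have hbd : BddAbove (Set.range fun p => ⨆ _ : p ∈ S, f p) := by
    apply (((hS.image f).insert 0).bddAbove).mono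
    rintro _ ⟨p, rfl⟩
    by_cases hp : p ∈ S
    · simp only [ciSup_pos hp]; exact Set.mem_insert_of_mem _ ⟨p, hp, rfl⟩
    · have : IsEmpty (p ∈ S) := by simpa using hp
      simp only [Real.iSup_of_isEmpty]; exact Set.mem_insert _ _
  calc f q = ⨆ _ : q ∈ S, f q := (ciSup_pos (f := fun _ => f q) hq).symm
    _ ≤ ⨆ p, ⨆ _ : p ∈ S, f p := le_ciSup hbd q

private lemma inner_two (x y : E) : ⟪x, y⟫ = x 0 * y 0 + x 1 * y 1 := by
  simp [PiLp.inner_apply, Fin.sum_univ_two, RCLike.inner_apply, starRingEnd_apply]; ring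

private lemma orth_basis (u : E) (hu : u ≠ 0) (w : E) (hw0 : w 0 = -(u 1)) (hw1 : w 1 = u 0)
    (z : E) (h1 : ⟪u, z⟫ = 0) (h2 : ⟪w, z⟫ = 0) : z = 0 := by
  rw [inner_two] at h1 h2
  rw [hw0, hw1] at h2
  have hu' : u 0 ≠ 0 ∨ u 1 ≠ 0 := by
    by_contra h; push_neg at h
    exact hu (by ext i; fin_cases i <;> simp [h.1, h.2])
  have hn : 0 < u 0 ^ 2 + u 1 ^ 2 := by
    rcases hu' with h | h
    · nlinarith [sq_nonneg (u 1), sq_abs (u 0), abs_pos.2 h]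
    · nlinarith [sq_nonneg (u 0), sq_abs (u 1), abs_pos.2 h]
  have hz0 : (u 0 ^ 2 + u 1 ^ 2) * z 0 = 0 := by linear_combination (u 0) * h1 - (u 1) * h2
  have hz1 : (u 0 ^ 2 + u 1 ^ 2) * z 1 = 0 := by linear_combination (u 1) * h1 + (u 0) * h2
  have z0 : z 0 = 0 := by
    rcases mul_eq_zero.1 hz0 with h | h
    · exact absurd h hn.ne'
    · exact h
  have z1 : z 1 = 0 := by
    rcases mul_eq_zero.1 hz1 with h | h
    · exact absurd h hn.ne'
    · exact h
  ext i; fin_cases i <;> simp [z0, z1]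

private lemma exists_support (P : Set E) (hPne : P.Nonempty) (c : E)
    (hfront : c ∈ frontier (convexHull ℝ P)) :
    ∃ u : E, u ≠ 0 ∧ ∀ p ∈ P, ⟪u, p - c⟫ ≤ 0 := by
  have hcc : c ∈ closure (convexHull ℝ P) := frontier_subset_closure hfront
  have hci : c ∉ interior (convexHull ℝ P) := hfront.2
  by_cases hint : (interior (convexHull ℝ P)).Nonempty
  · obtain ⟨f, hf⟩ := geometric_hahn_banach_open_point
      ((convex_convexHull ℝ P).interior) isOpen_interior hci
    obtain ⟨a, ha⟩ := hint
    set u : E := (InnerProductSpace.toDual ℝ E).symm f with hu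
    have hux : ∀ x : E, ⟪u, x⟫ = f x := fun x => InnerProductSpace.toDual_symm_apply
    have hfa : f a < f c := hf a ha
    refine ⟨u, ?_, ?_⟩
    · intro h
      rw [h] at hux
      have h1 := hux a; have h2 := hux c
      simp only [inner_zero_left] at h1 h2
      linarith [h1, h2, hfa]
    · intro p hp
      have hple : f p ≤ f c := by
        by_contra hcon
        push_neg at hcon
        set t : ℝ := min (1/2) ((f p - f c) / (2 * (|f a - f p| + 1))) with ht
        have h0 : 0 < (f p - f c) / (2 * (|f a - f p| + 1)) := by
          apply div_pos (by linarith) (by positivity)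
        have htpos : 0 < t := lt_min (by norm_num) h0
        have ht1 : t ≤ 1/2 := min_le_left _ _
        have htle : t ≤ (f p - f c) / (2 * (|f a - f p| + 1)) := min_le_right _ _
        have hmem : (1 - t) • p + t • a ∈ interior (convexHull ℝ P) :=
          (convex_convexHull ℝ P).combo_self_interior_mem_interior
            (subset_convexHull ℝ P hp) ha (by linarith) htpos (by ring)
        have := hf _ hmem
        rw [map_add, map_smul, map_smul] at this
        simp only [smul_eq_mul] at this
        have habs : t * |f a - f p| ≤ (f p - f c) / 2 := by
          rcases le_or_gt (|f a - f p|) 0 with h | h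
          · nlinarith
          · have := mul_le_mul_of_nonneg_right htle h.le
            rw [div_mul_eq_mul_div] at this
            calc t * |f a - f p| ≤ (f p - f c) * |f a - f p| / (2 * (|f a - f p| + 1)) := this
              _ ≤ (f p - f c) / 2 := by
                  rw [div_le_div_iff₀ (by positivity) (by norm_num)]
                  nlinarith
        have hge : f a - f p ≥ -|f a - f p| := neg_abs_le _
        nlinarith
      have := hux (p - c)
      rw [map_sub] at this
      linarith [this, hple]
  · have hspan : affineSpan ℝ P ≠ ⊤ := by
      rw [← affineSpan_convexHull]
      intro htop
      exact hint (((convex_convexHull ℝ P).interior_nonempty_iff_affineSpan_eq_top).2 htop)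
    set V := (affineSpan ℝ P).direction with hV
    have hVne : V ≠ ⊤ := by
      intro h
      exact hspan ((AffineSubspace.direction_eq_top_iff_of_nonempty
        ((affineSpan_nonempty ℝ).2 hPne)).1 h)
    have hVo : Vᗮ ≠ ⊥ := by
      simp only [ne_eq, Submodule.orthogonal_eq_bot_iff]
      exact hVne
    obtain ⟨u, huV, hu0⟩ := Submodule.exists_mem_ne_zero_of_ne_bot hVo
    have hcspan : c ∈ affineSpan ℝ P := by
      have hcl : IsClosed ((affineSpan ℝ P : Set E)) :=
        (affineSpan ℝ P).closed_of_finiteDimensional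
      exact closure_minimal (convexHull_subset_affineSpan P) hcl hcc
    refine ⟨u, hu0, fun p hp => ?_⟩
    have hpc : p - c ∈ V := by
      have := AffineSubspace.vsub_mem_direction (mem_affineSpan ℝ hp) hcspan
      simpa [vsub_eq_sub] using this
    have h0 := (Submodule.mem_orthogonal V u).1 huV _ hpc
    rw [real_inner_comm] at h0
    rw [h0]

private lemma sec_improve (P : Set E) (hPfin : P.Finite) (hne : P.Nonempty) (c : E)
    (hc : IsSECCenter P c) (R : ℝ) (hR : R = ⨆ p ∈ P, dist c p) (hRpos : 0 < R)
    (d : E) (hd : ∀ p ∈ P, dist c p = R → 0 < ⟪d, p - c⟫) : False := by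
  classical
  have hthr : ∀ p ∈ P, ∃ ε₀ > 0, ∀ ε : ℝ, 0 < ε → ε < ε₀ → dist (c + ε • d) p < R := by
    intro p hp
    have hle : dist c p ≤ R := hR ▸ real_le_biSup hPfin hp
    rcases lt_or_eq_of_le hle with hlt | heq
    · refine ⟨(R - dist c p)/(‖d‖+1), div_pos (by linarith) (by positivity), fun ε hε hεlt => ?_⟩
      have h1 : dist (c + ε • d) p ≤ dist (c + ε • d) c + dist c p := dist_triangle _ _ _
      have h2 : dist (c + ε • d) c = ε * ‖d‖ := by
        rw [dist_eq_norm]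
        simp [norm_smul, abs_of_pos hε]
      have h3 : ε * (‖d‖+1) < R - dist c p := by
        calc ε * (‖d‖+1) < ((R - dist c p)/(‖d‖+1)) * (‖d‖+1) :=
              mul_lt_mul_of_pos_right hεlt (by positivity)
          _ = R - dist c p := by field_simp
      nlinarith [norm_nonneg d, hε]
    · have hB := hd p hp heq
      set B := ⟪d, p - c⟫ with hBdef
      refine ⟨2*B/(‖d‖^2+1), by positivity, fun ε hε hεlt => ?_⟩
      have hpc : ‖p - c‖ = R := by
        rw [← dist_eq_norm, dist_comm]; exact heq
      have hsq : dist (c + ε • d) p ^ 2 = R^2 - 2*ε*B + ε^2*‖d‖^2 := by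
        rw [dist_eq_norm]
        have he : c + ε • d - p = ε • d - (p - c) := by abel
        rw [he, norm_sub_sq_real, real_inner_smul_left, norm_smul, hpc, hBdef]
        simp [abs_of_pos hε]
        ring
      have hlt2 : dist (c + ε • d) p ^ 2 < R^2 := by
        rw [hsq]
        have h1 : ε * (‖d‖^2+1) < 2*B := by
          calc ε * (‖d‖^2+1) < (2*B/(‖d‖^2+1)) * (‖d‖^2+1) :=
                mul_lt_mul_of_pos_right hεlt (by positivity)
            _ = 2*B := by field_simp
        nlinarith [sq_nonneg ‖d‖, hε]
      exact lt_of_pow_lt_pow_left₀ 2 hRpos.le hlt2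
  choose! ε₀ hε₀pos hε₀ using hthr
  set F := hPfin.toFinset with hF
  have hFne : F.Nonempty := by
    rwa [hF, Set.Finite.toFinset_nonempty]
  set m := F.inf' hFne ε₀ with hm
  have hmpos : 0 < m := by
    rw [hm]
    apply (Finset.lt_inf'_iff hFne).2
    intro p hp
    exact hε₀pos p (by rwa [hF, Set.Finite.mem_toFinset] at hp)
  set x := c + (m/2) • d with hx
  have hxlt : ∀ p ∈ P, dist x p < R := by
    intro p hp
    apply hε₀ p hp (m/2) (by positivity)
    calc m/2 < m := by linarith
      _ ≤ ε₀ p := Finset.inf'_le _ (by rwa [hF, Set.Finite.mem_toFinset])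
  obtain ⟨p₀, hp₀, hmax⟩ := Set.exists_max_image P (dist x) hPfin hne
  have h1 : R ≤ ⨆ p ∈ P, dist x p := hR ▸ hc x
  have h2 : (⨆ p ∈ P, dist x p) ≤ dist x p₀ := real_biSup_le dist_nonneg hmax
  linarith [hxlt p₀ hp₀]

private lemma caseB (P : Set E) (hPfin : P.Finite) (hne : P.Nonempty) (c : E)
    (hc : IsSECCenter P c) (R : ℝ) (hR : R = ⨆ p ∈ P, dist c p) (hRpos : 0 < R)
    (u : E) (hu : ∀ p ∈ P, ⟪u, p - c⟫ ≤ 0) (w' : E)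
    (hkey : ∀ p ∈ P, ⟪u, p - c⟫ = 0 → p ≠ c → 0 < ⟪w', p - c⟫) : False := by
  classical
  set F := hPfin.toFinset with hF
  have hFne : F.Nonempty := by rwa [hF, Set.Finite.toFinset_nonempty]
  set g : E → ℝ := fun p =>
    if ⟪u, p - c⟫ < 0 then (-⟪u, p - c⟫)/(1+|⟪w', p - c⟫|) else 1 with hg
  have hgpos : ∀ p, 0 < g p := by
    intro p
    rw [hg]
    dsimp only
    split
    · next h => exact div_pos (by linarith) (by positivity)
    · norm_num
  set δ := F.inf' hFne g with hδ
  have hδpos : 0 < δ := (Finset.lt_inf'_iff hFne).2 fun p _ => hgpos p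
  refine sec_improve P hPfin hne c hc R hR hRpos (-u + δ • w') ?_
  intro p hp hpR
  have hpc : p ≠ c := by
    intro h
    rw [h] at hpR
    simp only [dist_self] at hpR
    exact hRpos.ne' hpR.symm
  have hinner : ⟪-u + δ • w', p - c⟫ = -⟪u, p - c⟫ + δ * ⟪w', p - c⟫ := by
    rw [inner_add_left, inner_neg_left, real_inner_smul_left]
  rcases lt_or_eq_of_le (hu p hp) with hlt | heq
  · have hδle : δ ≤ g p := Finset.inf'_le _ (by rwa [hF, Set.Finite.mem_toFinset])
    rw [hg] at hδle
    dsimp only at hδle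
    rw [if_pos hlt] at hδle
    set A := -⟪u, p - c⟫ with hA
    set B := ⟪w', p - c⟫ with hB
    have hApos : 0 < A := by rw [hA]; linarith
    rw [hinner]
    have h1 : -(δ * |B|) ≤ δ * B := by nlinarith [neg_abs_le B, hδpos.le]
    have h2 : δ * |B| ≤ A/(1+|B|) * |B| := mul_le_mul_of_nonneg_right hδle (abs_nonneg B)
    have h3 : A/(1+|B|) * |B| < A := by
      rw [div_mul_eq_mul_div, div_lt_iff₀ (by positivity)]
      nlinarith [abs_nonneg B]
    linarith
  · have hBpos := hkey p hp heq hpc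
    rw [hinner, heq]
    have := mul_pos hδpos hBpos
    linarith

theorem stmt7
    (P : Set E) (hPfin : P.Finite) (hPcard : 2 ≤ P.ncard)
    (c : E) (hc : IsSECCenter P c)
    (hfront : c ∈ frontier (convexHull ℝ P)) :
    ∃ x ∈ P, ∃ y ∈ P, x ≠ y ∧ c ∈ openSegment ℝ x y := by
  classical
  obtain ⟨p₁, hp₁, p₂, hp₂, hp12⟩ := (Set.one_lt_ncard hPfin).1 (by omega)
  have hne : P.Nonempty := ⟨p₁, hp₁⟩
  set R := ⨆ p ∈ P, dist c p with hR
  have hRpos : 0 < R := by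
    by_contra h
    push_neg at h
    have h1 : dist c p₁ ≤ R := real_le_biSup hPfin hp₁
    have h2 : dist c p₂ ≤ R := real_le_biSup hPfin hp₂
    have e1 : dist c p₁ = 0 := le_antisymm (by linarith) dist_nonneg
    have e2 : dist c p₂ = 0 := le_antisymm (by linarith) dist_nonneg
    exact hp12 ((dist_eq_zero.1 e1).symm.trans (dist_eq_zero.1 e2))
  obtain ⟨u, hu0, hu⟩ := exists_support P hne c hfront
  set w : E := (WithLp.equiv 2 (Fin 2 → ℝ)).symm ![-(u 1), u 0] with hwdef
  have hw0 : w 0 = -(u 1) := rfl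
  have hw1 : w 1 = u 0 := rfl
  have hwne : w ≠ 0 := by
    intro h
    apply hu0
    have e0 : w 0 = 0 := by rw [h]; rfl
    have e1 : w 1 = 0 := by rw [h]; rfl
    rw [hw0] at e0; rw [hw1] at e1
    ext i; fin_cases i
    · simpa using e1
    · simpa using (neg_eq_zero.1 e0)
  have huw : ⟪u, w⟫ = 0 := by
    rw [inner_two, hw0, hw1]; ring
  have hQne : ∀ p ∈ P, ⟪u, p - c⟫ = 0 → p ≠ c → ⟪w, p - c⟫ ≠ 0 := by
    intro p hp h1 hpc h2
    exact hpc (sub_eq_zero.1 (orth_basis u hu0 w hw0 hw1 _ h1 h2))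
  by_cases hpos : ∃ p ∈ P, ⟪u, p - c⟫ = 0 ∧ 0 < ⟪w, p - c⟫
  · by_cases hneg : ∃ p ∈ P, ⟪u, p - c⟫ = 0 ∧ ⟪w, p - c⟫ < 0
    · -- Case A : points on both sides, c is in an open segment
      obtain ⟨x, hxP, hxu, hxw⟩ := hpos
      obtain ⟨y, hyP, hyu, hyw⟩ := hneg
      have hn : (0:ℝ) < ⟪w, w⟫ := by
        rw [real_inner_self_eq_norm_sq]
        exact pow_pos (norm_pos_iff.2 hwne) 2
      set tx := ⟪w, x - c⟫ / ⟪w, w⟫ with htxd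
      set ty := ⟪w, y - c⟫ / ⟪w, w⟫ with htyd
      have htx : 0 < tx := div_pos hxw hn
      have hty : ty < 0 := div_neg_of_neg_of_pos hyw hn
      have hxe : x - c = tx • w := by
        refine sub_eq_zero.1 (orth_basis u hu0 w hw0 hw1 ((x - c) - tx • w) ?_ ?_)
        · rw [inner_sub_right, real_inner_smul_right, huw, hxu]; ring
        · rw [inner_sub_right, real_inner_smul_right, htxd,
            div_mul_cancel₀ _ hn.ne', sub_self]
      have hye : y - c = ty • w := by
        refine sub_eq_zero.1 (orth_basis u hu0 w hw0 hw1 ((y - c) - ty • w) ?_ ?_)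
        · rw [inner_sub_right, real_inner_smul_right, huw, hyu]; ring
        · rw [inner_sub_right, real_inner_smul_right, htyd,
            div_mul_cancel₀ _ hn.ne', sub_self]
      have hxy : x ≠ y := by
        intro h
        have : tx • w = ty • w := by rw [← hxe, ← hye, h]
        have := smul_left_injective ℝ hwne this
        linarith
      refine ⟨x, hxP, y, hyP, hxy, ?_⟩
      have hsub : tx - ty > 0 := by linarith
      have hx2 : x = c + tx • w := by rw [← hxe]; abel
      have hy2 : y = c + ty • w := by rw [← hye]; abel
      refine ⟨-ty/(tx-ty), tx/(tx-ty), div_pos (by linarith) hsub, div_pos htx hsub, ?_, ?_⟩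
      · field_simp
        ring
      · rw [hx2, hy2]
        match_scalars
        · field_simp
          ring
        · field_simp
          ring
    · -- Case B : all on-line points on the nonnegative side (or nonpositive)
      push_neg at hneg
      exact absurd (caseB P hPfin hne c hc R hR hRpos u hu w
        (fun p hp h hpc => lt_of_le_of_ne (hneg p hp h) (Ne.symm (hQne p hp h hpc)))) id
  · push_neg at hpos
    refine absurd (caseB P hPfin hne c hc R hR hRpos u hu (-w) (fun p hp h hpc => ?_)) id
    rw [inner_neg_left]
    have h1 := hpos p hp h
    have h2 := hQne p hp h hpc
    have : ⟪w, p - c⟫ < 0 := lt_of_le_of_ne h1 h2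
    linarith
end

section
/- Let P be a finite set of points in the Euclidean plane and let c be a point lying in the interior of the convex hull of P, i.e. c ∈ interior (convexHull ℝ P). Let s : E → ℝ be a function with s p > 0 for every p ∈ P, and let Q = { c + s p • (p − c) : p ∈ P } be the set obtained by moving each point of P along the straight line through c toward or away from c without reaching c. Then c remains in the interior of the convex hull of Q: c ∈ interior (convexHull ℝ Q). -/
open Metric

theorem stmt8
    (P : Set E) (hPfin : P.Finite)
    (c : E) (hc : c ∈ interior (convexHull ℝ P))
    (s : E → ℝ) (hs : ∀ p ∈ P, 0 < s p)
    (Q : Set E) (hQ : Q = (fun p => c + s p • (p - c)) '' P) :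
    c ∈ interior (convexHull ℝ Q) := by
  have hchP : c ∈ convexHull ℝ P := interior_subset hc
  -- P is nonempty
  have hPne : P.Nonempty := by
    rcases Set.eq_empty_or_nonempty P with h | h
    · simp [h, convexHull_empty] at hc
    · exact h
  have hQfin : Q.Finite := hQ ▸ hPfin.image _
  -- Step 1: c ∈ convexHull ℝ Q, by separation
  have hcQ : c ∈ convexHull ℝ Q := by
    by_contra hcn
    obtain ⟨f, u, hfc, hfb⟩ := geometric_hahn_banach_point_closed
      (convex_convexHull ℝ Q) ((hQfin.isCompact_convexHull (𝕜 := ℝ)).isClosed) hcn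
    -- For every p ∈ P, f c < f p
    have key : ∀ p ∈ P, f c < f p := by
      intro p hp
      have hq : c + s p • (p - c) ∈ convexHull ℝ Q :=
        subset_convexHull ℝ Q (hQ ▸ ⟨p, hp, rfl⟩)
      have := (hfc.trans (hfb _ hq))
      have hf : f c < f c + s p * f (p - c) := by
        simpa [map_add, map_smul, smul_eq_mul] using this
      have hpc : 0 < f (p - c) := by
        have hsp := hs p hp
        nlinarith
      have : f p - f c > 0 := by simpa [map_sub] using hpc
      linarith
    -- so convexHull P ⊆ {x | f c < f x}, contradiction with c ∈ hull P
    have hsub : convexHull ℝ P ⊆ {x | f c < f x} := by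
      apply convexHull_min
      · exact fun p hp => key p hp
      · exact (convex_halfSpace_gt (f.isLinear) (f c))
    exact lt_irrefl (f c) (hsub hchP)
  -- Step 2: define m = min of s over P
  set F := hPfin.toFinset with hF
  have hFne : F.Nonempty := by
    simpa [hF, Set.Finite.toFinset_nonempty] using hPne
  set m := F.inf' hFne s with hm
  have hmpos : 0 < m := by
    apply Finset.lt_inf'_iff hFne |>.2
    intro p hp
    exact hs p (hPfin.mem_toFinset.1 hp)
  have hmle : ∀ p ∈ P, m ≤ s p := fun p hp =>
    Finset.inf'_le s (hPfin.mem_toFinset.2 hp)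
  -- Step 3: the homothety image of hull P lies in hull Q
  have hhom : ∀ x ∈ convexHull ℝ P, c + m • (x - c) ∈ convexHull ℝ Q := by
    have : convexHull ℝ P ⊆ (AffineMap.homothety c m) ⁻¹' (convexHull ℝ Q) := by
      apply convexHull_min
      · intro p hp
        have hsp := hs p hp
        have hq : c + s p • (p - c) ∈ convexHull ℝ Q :=
          subset_convexHull ℝ Q (hQ ▸ ⟨p, hp, rfl⟩)
        have hb0 : 0 ≤ m / s p := le_of_lt (div_pos hmpos hsp)
        have hb1 : m / s p ≤ 1 := (div_le_one hsp).2 (hmle p hp)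
        have := (convex_convexHull ℝ Q) hcQ hq (by linarith : (0:ℝ) ≤ 1 - m / s p) hb0
          (by ring)
        simp only [Set.mem_preimage, AffineMap.homothety_apply]
        have heq : (1 - m / s p) • c + (m / s p) • (c + s p • (p - c))
            = m • (p -ᵥ c) +ᵥ c := by
          have hms : (m / s p) * s p = m := div_mul_cancel₀ m (ne_of_gt hsp)
          simp only [smul_add, smul_smul, hms, vadd_eq_add, vsub_eq_sub]
          module
        rw [← heq]
        exact this
      · exact (convex_convexHull ℝ Q).affine_preimage _
    intro x hx
    have := this hx
    simpa [AffineMap.homothety_apply, add_comm] using this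
  -- Step 4: conclude via balls
  obtain ⟨ε, hε, hball⟩ := mem_interior_iff_mem_nhds.1 hc |> Metric.mem_nhds_iff.1
  rw [mem_interior_iff_mem_nhds, Metric.mem_nhds_iff]
  refine ⟨m * ε, by positivity, fun y hy => ?_⟩
  have hx : c + m⁻¹ • (y - c) ∈ Metric.ball c ε := by
    rw [Metric.mem_ball, dist_eq_norm] at hy ⊢
    have : ‖c + m⁻¹ • (y - c) - c‖ = m⁻¹ * ‖y - c‖ := by
      rw [add_sub_cancel_left, norm_smul, Real.norm_eq_abs, abs_of_pos (by positivity)]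
    rw [this]
    rw [show y - c = y - c from rfl] at hy
    calc m⁻¹ * ‖y - c‖ < m⁻¹ * (m * ε) := by
          apply mul_lt_mul_of_pos_left _ (by positivity)
          simpa using hy
      _ = ε := by field_simp
  have := hhom _ (hball hx)
  have heq : c + m • (c + m⁻¹ • (y - c) - c) = y := by
    rw [add_sub_cancel_left, smul_smul, mul_inv_cancel₀ (ne_of_gt hmpos), one_smul]
    abel
  rwa [heq] at this
end

section
/- Let P be a finite set of at least two points in the Euclidean plane, let c be the center of its smallest enclosing circle and R its radius. Then either the circle passes through two points of P that are opposite on the same diameter — i.e. there exist p, p' ∈ P with dist c p = R, dist c p' = R and c = midpoint ℝ p p' — or it passes through at least three of the points of P — i.e. the set { p ∈ P : dist c p = R } has at least three elements. -/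
open Metric RealInnerProductSpace

lemma biSup_dist (x : E) {P : Set E} (hne : P.Nonempty) (hfin : P.Finite) :
    (⨆ p ∈ P, dist x p) = sSup ((dist x) '' P) := by
  obtain ⟨p₀, hp₀⟩ := id hne
  have hbdd : BddAbove (Set.range fun i : P ↦ dist x i) := by
    rw [← Set.image_eq_range]
    exact (hfin.image (dist x)).bddAbove
  refine (csSup_image hbdd ?_).symm
  rw [Real.sSup_empty]
  have : Nonempty P := ⟨⟨p₀, hp₀⟩⟩
  exact le_trans dist_nonneg (le_ciSup hbdd (⟨p₀, hp₀⟩ : P))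

lemma dist_move_sq (c m q : E) (t : ℝ) :
    dist (c + t • (m - c)) q ^ 2
      = dist c q ^ 2 - 2 * t * ⟪m - c, q - c⟫ + t ^ 2 * ‖m - c‖ ^ 2 := by
  rw [dist_eq_norm, dist_eq_norm]
  have h : c + t • (m - c) - q = (c - q) + t • (m - c) := by abel
  rw [h, norm_add_sq_real, real_inner_smul_right, norm_smul]
  have h2 : ⟪c - q, m - c⟫ = -⟪m - c, q - c⟫ := by
    rw [real_inner_comm]
    rw [show c - q = -(q - c) by abel, inner_neg_right]
  rw [h2]
  simp only [mul_pow, Real.norm_eq_abs, sq_abs]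
  ring

lemma move_lemma {P : Set E} (hfin : P.Finite) (hne : P.Nonempty) (c m : E) (hm : m ≠ c)
    (R : ℝ) (hub : ∀ q ∈ P, dist c q ≤ R)
    (hpos : ∀ q ∈ P, dist c q = R → 0 < ⟪m - c, q - c⟫) :
    ∃ x : E, ∀ q ∈ P, dist x q < R := by
  classical
  have hmc : (0:ℝ) < ‖m - c‖ := by
    rw [norm_pos_iff, sub_ne_zero]; exact hm
  have hmc2 : (0:ℝ) < ‖m - c‖ ^ 2 := by positivity
  set ε : E → ℝ := fun q =>
    if dist c q = R then 2 * ⟪m - c, q - c⟫ / ‖m - c‖ ^ 2 else (R - dist c q) / ‖m - c‖ with hε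
  have hεpos : ∀ q ∈ P, 0 < ε q := by
    intro q hq
    by_cases h : dist c q = R
    · simp only [hε, if_pos h]
      exact div_pos (by linarith [hpos q hq h]) hmc2
    · simp only [hε, if_neg h]
      exact div_pos (by have := lt_of_le_of_ne (hub q hq) h; linarith) hmc
  set F : Finset E := hfin.toFinset with hF
  have hFne : F.Nonempty := by
    rw [hF, Set.Finite.toFinset_nonempty]; exact hne
  set t : ℝ := (F.inf' hFne ε) / 2 with ht
  have hinfpos : 0 < F.inf' hFne ε := by
    rw [Finset.lt_inf'_iff]
    intro q hq
    exact hεpos q (by rwa [hF, Set.Finite.mem_toFinset] at hq)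
  have htpos : 0 < t := by rw [ht]; linarith
  have htlt : ∀ q ∈ P, t < ε q := by
    intro q hq
    have h1 : F.inf' hFne ε ≤ ε q := Finset.inf'_le ε (by rwa [hF, Set.Finite.mem_toFinset])
    rw [ht]; linarith
  refine ⟨c + t • (m - c), fun q hq => ?_⟩
  have hxc : dist (c + t • (m - c)) c = t * ‖m - c‖ := by
    rw [dist_eq_norm]
    have : c + t • (m - c) - c = t • (m - c) := by abel
    rw [this, norm_smul, Real.norm_eq_abs, abs_of_pos htpos]
  by_cases h : dist c q = R
  · have hsq := dist_move_sq c m q t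
    have hR0 : 0 ≤ R := le_trans dist_nonneg (hub q hq)
    have hlt : t < 2 * ⟪m - c, q - c⟫ / ‖m - c‖ ^ 2 := by
      simpa only [hε, if_pos h] using htlt q hq
    have h2 : t * ‖m - c‖ ^ 2 < 2 * ⟪m - c, q - c⟫ := by
      rw [← lt_div_iff₀ hmc2]; exact hlt
    have hlt2 : dist (c + t • (m - c)) q ^ 2 < R ^ 2 := by
      rw [hsq, h]; nlinarith
    nlinarith [dist_nonneg (x := c + t • (m - c)) (y := q)]
  · have hlt : t < (R - dist c q) / ‖m - c‖ := by
      simpa only [hε, if_neg h] using htlt q hq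
    have h2 : t * ‖m - c‖ < R - dist c q := by
      rw [← lt_div_iff₀ hmc]; exact hlt
    calc dist (c + t • (m - c)) q ≤ dist (c + t • (m - c)) c + dist c q := dist_triangle _ _ _
      _ < R := by rw [hxc]; linarith

theorem stmt10
    (P : Set E) (hPfin : P.Finite) (hPcard : 2 ≤ P.ncard)
    (c : E) (hc : IsSECCenter P c)
    (R : ℝ) (hR : R = ⨆ p ∈ P, dist c p) :
    (∃ p ∈ P, ∃ p' ∈ P, dist c p = R ∧ dist c p' = R ∧ c = midpoint ℝ p p') ∨
      3 ≤ {p ∈ P | dist c p = R}.ncard := by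
  have hne : P.Nonempty := by
    rw [← Set.ncard_pos hPfin]; omega
  have hR' : R = sSup ((dist c) '' P) := by rw [hR, biSup_dist c hne hPfin]
  have hub : ∀ q ∈ P, dist c q ≤ R := by
    intro q hq
    rw [hR']
    exact le_csSup (hPfin.image (dist c)).bddAbove ⟨q, hq, rfl⟩
  have hmem : R ∈ (dist c) '' P := by
    rw [hR']
    exact (hne.image (dist c)).csSup_mem (hPfin.image (dist c))
  obtain ⟨p₁, hp₁P, hp₁⟩ := hmem
  have hRpos : 0 < R := by
    obtain ⟨u, v, hu, hv, huv⟩ := (Set.one_lt_ncard_iff hPfin).mp (by omega)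
    have h1 : 0 < dist u v := dist_pos.mpr huv
    have h2 : dist u v ≤ dist u c + dist c v := dist_triangle _ _ _
    have h3 : dist u c = dist c u := dist_comm _ _
    have := hub u hu
    have := hub v hv
    linarith
  by_contra hcon
  push_neg at hcon
  obtain ⟨h1, h2⟩ := hcon
  set K : Set E := {p ∈ P | dist c p = R} with hK
  have hKsub : K ⊆ P := fun x hx => hx.1
  have hKfin : K.Finite := hPfin.subset hKsub
  have hKne : K.Nonempty := ⟨p₁, hp₁P, hp₁⟩
  have hKcard : K.ncard = 1 ∨ K.ncard = 2 := by
    have := (Set.ncard_pos hKfin).mpr hKne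
    omega
  -- produce m with the required properties
  have hmex : ∃ m : E, m ≠ c ∧ ∀ q ∈ P, dist c q = R → 0 < ⟪m - c, q - c⟫ := by
    rcases hKcard with h | h
    · obtain ⟨a, ha⟩ := Set.ncard_eq_one.mp h
      have haK : a ∈ K := by rw [ha]; exact rfl
      refine ⟨a, ?_, ?_⟩
      · intro hac
        have : dist c a = R := haK.2
        rw [hac, dist_self] at this
        linarith
      · intro q hq hqR
        have hqK : q ∈ K := ⟨hq, hqR⟩
        rw [ha, Set.mem_singleton_iff] at hqK
        subst hqK
        rw [real_inner_self_eq_norm_sq]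
        have : ‖q - c‖ = R := by rw [← dist_eq_norm, dist_comm]; exact hqR
        rw [this]; positivity
    · obtain ⟨a, b, hab, hKab⟩ := Set.ncard_eq_two.mp h
      have haK : a ∈ K := by rw [hKab]; left; rfl
      have hbK : b ∈ K := by rw [hKab]; right; rfl
      have hmc : midpoint ℝ a b ≠ c :=
        fun hmc => h1 a (hKsub haK) b (hKsub hbK) haK.2 hbK.2 hmc.symm
      have hna : ‖a - c‖ = R := by rw [← dist_eq_norm, dist_comm]; exact haK.2
      have hnb : ‖b - c‖ = R := by rw [← dist_eq_norm, dist_comm]; exact hbK.2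
      have hmsub : midpoint ℝ a b - c = (1/2 : ℝ) • ((a - c) + (b - c)) := by
        rw [midpoint_eq_smul_add, invOf_eq_inv]
        module
      set s : ℝ := ⟪a - c, b - c⟫ with hs
      have hnm : ‖midpoint ℝ a b - c‖ ^ 2 = (R ^ 2 + 2 * s + R ^ 2) / 4 := by
        rw [hmsub, norm_smul, mul_pow, norm_add_sq_real, hna, hnb,
          Real.norm_eq_abs, abs_of_pos (by norm_num : (0:ℝ) < 1/2), ← hs]
        ring
      have hspos : 0 < R ^ 2 + s := by
        have : 0 < ‖midpoint ℝ a b - c‖ ^ 2 :=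
          pow_pos (norm_pos_iff.mpr (sub_ne_zero.mpr hmc)) 2
        rw [hnm] at this; linarith
      refine ⟨midpoint ℝ a b, hmc, ?_⟩
      intro q hq hqR
      have hqK : q ∈ K := ⟨hq, hqR⟩
      rw [hKab] at hqK
      rcases hqK with rfl | rfl
      · rw [hmsub, real_inner_smul_left, inner_add_left, real_inner_self_eq_norm_sq, hna]
        have hcomm : ⟪b - c, q - c⟫ = s := by rw [hs]; exact real_inner_comm _ _
        rw [hcomm]; linarith
      · rw [hmsub, real_inner_smul_left, inner_add_left, real_inner_self_eq_norm_sq, hnb,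
          ← hs]
        linarith
  obtain ⟨m, hm, hpos⟩ := hmex
  obtain ⟨x, hx⟩ := move_lemma hPfin hne c m hm R hub hpos
  have hcx := hc x
  rw [← hR, biSup_dist x hne hPfin] at hcx
  have hxmem : sSup ((dist x) '' P) ∈ (dist x) '' P :=
    (hne.image (dist x)).csSup_mem (hPfin.image (dist x))
  obtain ⟨q, hqP, hq⟩ := hxmem
  have := hx q hqP
  rw [hq] at this
  linarith
end
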